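/- There exists a set function f : 2^V → ℝ and sets A ⊆ A' with f(A) > f(A'); in particular, the negated symmetric-KL objective from the three-node MRF counterexample (priors φ(X)=[0.5,0.5], φ(Y)=[0.8,0.2], φ(Z)=[0.1,0.9], homophily potential 0.99/0.01) is not monotonically increasing: adding the variable Y to the subgraph {X} strictly increases the symmetric KL-divergence between the marginal of X on the subgraph and on the full graph. -/

import Mathlib

open Finset

/-- Symmetric KL-divergence. -/
noncomputable def symKL (p q : Fin 2 → ℝ) : ℝ :=
  ∑ x, (p x - q x) * Real.log (p x / q x)

/-- Priors of the two leaves: leaf 0 is Y with prior [0.8, 0.2],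
leaf 1 is Z with prior [0.1, 0.9]. -/
noncomputable def leafPrior : Fin 2 → Fin 2 → ℝ := ![![0.8, 0.2], ![0.1, 0.9]]

/-- Homophily potential. -/
noncomputable def pot (a b : Fin 2) : ℝ := if a = b then 0.99 else 0.01

/-- Message from leaf `i` to the center `X`. -/
noncomputable def msg (i : Fin 2) (x : Fin 2) : ℝ := ∑ w, pot w x * leafPrior i w

/-- Prior of the center `X`: [0.5, 0.5]. -/
noncomputable def priorX : Fin 2 → ℝ := ![0.5, 0.5]

/-- Exact BP marginal of the center `X` of the star MRF restricted to the
subgraph induced by the leaf set `S` together with `X`. -/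
noncomputable def marg (S : Finset (Fin 2)) (x : Fin 2) : ℝ :=
  (priorX x * ∏ i ∈ S, msg i x) / (∑ y, priorX y * ∏ i ∈ S, msg i y)

/-- Negated symmetric KL-divergence objective. -/
noncomputable def objf (S : Finset (Fin 2)) : ℝ :=
  -symKL (marg Finset.univ) (marg S)

lemma log_ge_one_sub_inv {x : ℝ} (hx : 0 < x) : 1 - 1/x ≤ Real.log x := by
  have h := Real.log_le_sub_one_of_pos (show (0:ℝ) < 1/x by positivity)
  rw [Real.log_div one_ne_zero (ne_of_gt hx), Real.log_one] at h
  linarith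

lemma marg_empty (x : Fin 2) : marg ∅ x = 1/2 := by
  fin_cases x <;>
    norm_num [marg, priorX, Fin.sum_univ_two]

lemma marg_univ_zero : marg Finset.univ 0 = 10719/33688 := by
  norm_num [marg, msg, priorX, pot, leafPrior, Fin.sum_univ_two, Fin.prod_univ_two]

lemma marg_univ_one : marg Finset.univ 1 = 22969/33688 := by
  norm_num [marg, msg, priorX, pot, leafPrior, Fin.sum_univ_two, Fin.prod_univ_two,
    Fin.ext_iff]

lemma marg_single_zero : marg {(0 : Fin 2)} 0 = 397/500 := by
  norm_num [marg, msg, priorX, pot, leafPrior, Fin.sum_univ_two, Finset.prod_singleton]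

lemma marg_single_one : marg {(0 : Fin 2)} 1 = 103/500 := by
  norm_num [marg, msg, priorX, pot, leafPrior, Fin.sum_univ_two, Finset.prod_singleton,
    Fin.ext_iff]

/-- The objective is not monotonically increasing: adding leaf `Y` (leaf 0) to
the subgraph `{X}` (leaf set ∅) strictly decreases the objective, i.e. strictly
increases the symmetric KL-divergence to the full-graph marginal of `X`.
In particular there are `A ⊆ A'` with `f(A) > f(A')`. -/
theorem objf_not_monotone :
    objf ∅ > objf {(0 : Fin 2)} ∧
    ∃ A A' : Finset (Fin 2), A ⊆ A' ∧ objf A > objf A' := by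
  have hmain : objf ∅ > objf {(0 : Fin 2)} := by
    unfold objf symKL
    rw [Fin.sum_univ_two, Fin.sum_univ_two, marg_empty, marg_empty,
      marg_univ_zero, marg_univ_one, marg_single_zero, marg_single_one]
    have e1 : (10719/33688 : ℝ) / (1/2) = 10719/16844 := by norm_num
    have e2 : (22969/33688 : ℝ) / (1/2) = 22969/16844 := by norm_num
    have e3 : (10719/33688 : ℝ) / (397/500) = 3375/8422 := by norm_num
    have e4 : (22969/33688 : ℝ) / (103/500) = 27875/8422 := by norm_num
    rw [e1, e2, e3, e4]
    have hA : (-6125/10719 : ℝ) ≤ Real.log (10719/16844) := by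
      have := log_ge_one_sub_inv (show (0:ℝ) < 10719/16844 by norm_num)
      norm_num at this ⊢; linarith
    have hB : Real.log (22969/16844) ≤ 6125/16844 := by
      have := Real.log_le_sub_one_of_pos (show (0:ℝ) < 22969/16844 by norm_num)
      norm_num at this ⊢; linarith
    have hC : Real.log (3375/8422) ≤ -5047/8422 := by
      have := Real.log_le_sub_one_of_pos (show (0:ℝ) < 3375/8422 by norm_num)
      norm_num at this ⊢; linarith
    have hD : (19453/27875 : ℝ) ≤ Real.log (27875/8422) := by
      have := log_ge_one_sub_inv (show (0:ℝ) < 27875/8422 by norm_num)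
      norm_num at this ⊢; linarith
    nlinarith [hA, hB, hC, hD]
  exact ⟨hmain, ∅, {(0 : Fin 2)}, Finset.empty_subset _, hmain⟩
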